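/- arXiv:1401.5745 — 2 statements merged into one kernel-verified Lean document; each statement's English description precedes it below -/
import Mathlib

section
/- For every τ with 0 < τ ≤ Kπ and every positive integer K, the partial cosine sum satisfies |(1/K)·∑_{n=1}^{K} cos((n/K)·τ)| ≤ π/τ. -/
open Real Finset

theorem cK_bound (K : ℕ) (hK : 0 < K) (τ : ℝ) (hτ : 0 < τ) (hτK : τ ≤ K * Real.pi) :
    |(1 / (K : ℝ)) * ∑ n ∈ Finset.Icc 1 K, Real.cos ((n / K : ℝ) * τ)| ≤ Real.pi / τ := by
  have hKpos : (0:ℝ) < K := by exact_mod_cast hK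
  set θ : ℝ := τ / K with hθ
  have hθpos : 0 < θ := div_pos hτ hKpos
  have hθle : θ ≤ Real.pi := by
    rw [hθ, div_le_iff₀ hKpos]; linarith [hτK]
  have hπ := Real.pi_pos
  have hs : 0 < Real.sin (θ/2) :=
    Real.sin_pos_of_pos_of_lt_pi (by linarith) (by linarith)
  -- Jordan inequality
  have hJ : θ / Real.pi ≤ Real.sin (θ/2) := by
    have := Real.mul_le_sin (x := θ/2) (by linarith) (by linarith)
    calc θ / Real.pi = 2 / Real.pi * (θ/2) := by field_simp
    _ ≤ Real.sin (θ/2) := this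
  -- telescoping identity
  have sum_eq : (2 * Real.sin (θ/2)) * ∑ n ∈ Finset.Icc 1 K, Real.cos ((n / K : ℝ) * τ)
      = Real.sin (((K:ℝ) + 1/2) * θ) - Real.sin ((1/2) * θ) := by
    rw [Finset.mul_sum, ← Finset.Ico_add_one_right_eq_Icc, Finset.sum_Ico_eq_sum_range]
    have : ∀ i ∈ Finset.range (K + 1 - 1),
        2 * Real.sin (θ/2) * Real.cos ((↑(1 + i) / K : ℝ) * τ)
          = Real.sin (((i:ℝ) + 1 + 1/2) * θ) - Real.sin (((i:ℝ) + 1/2) * θ) := by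
      intro i _
      have harg : ((↑(1 + i) : ℝ) / K) * τ = ((i:ℝ) + 1) * θ := by
        rw [hθ]; push_cast; ring
      rw [harg, Real.sin_sub_sin]
      ring_nf
    rw [Finset.sum_congr rfl this]
    have := Finset.sum_range_sub (fun i => Real.sin (((i:ℝ) + 1/2) * θ)) (K + 1 - 1)
    simp only [Nat.add_sub_cancel] at this ⊢
    convert this using 2 <;> push_cast <;> ring
  have hsum : |∑ n ∈ Finset.Icc 1 K, Real.cos ((n / K : ℝ) * τ)| ≤ 1 / Real.sin (θ/2) := by
    have h2s : (0:ℝ) < 2 * Real.sin (θ/2) := by linarith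
    rw [le_div_iff₀ hs]
    have : |(2 * Real.sin (θ/2)) * ∑ n ∈ Finset.Icc 1 K, Real.cos ((n / K : ℝ) * τ)| ≤ 2 := by
      rw [sum_eq]
      have h1 := Real.abs_sin_le_one (((K:ℝ) + 1/2) * θ)
      have h2 := Real.abs_sin_le_one ((1/2) * θ)
      calc |Real.sin (((K:ℝ) + 1/2) * θ) - Real.sin ((1/2) * θ)|
          ≤ |Real.sin (((K:ℝ) + 1/2) * θ)| + |Real.sin ((1/2) * θ)| := abs_sub _ _
        _ ≤ 2 := by linarith
    rw [abs_mul, abs_of_pos h2s] at this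
    nlinarith [abs_nonneg (∑ n ∈ Finset.Icc 1 K, Real.cos ((n / K : ℝ) * τ))]
  -- conclude
  rw [abs_mul, abs_of_pos (by positivity : (0:ℝ) < 1 / (K:ℝ))]
  have hfin : 1 / Real.sin (θ/2) ≤ Real.pi / θ := by
    rw [div_le_div_iff₀ hs hθpos]
    have := mul_le_mul_of_nonneg_left hJ (le_of_lt hπ)
    calc 1 * θ = Real.pi * (θ / Real.pi) := by field_simp
    _ ≤ Real.pi * Real.sin (θ/2) := this
  calc 1 / (K:ℝ) * |∑ n ∈ Finset.Icc 1 K, Real.cos ((n / K : ℝ) * τ)|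
      ≤ 1 / (K:ℝ) * (1 / Real.sin (θ/2)) := by
        apply mul_le_mul_of_nonneg_left hsum (by positivity)
    _ ≤ 1 / (K:ℝ) * (Real.pi / θ) := by
        apply mul_le_mul_of_nonneg_left hfin (by positivity)
    _ = Real.pi / τ := by rw [hθ]; field_simp
end

section
/- For every τ with 0 < τ ≤ Kπ and every positive integer K, the derivative of c_K satisfies |c_K'(τ)| = |(1/K)·∑_{n=1}^{K} (n/K)·sin((n/K)·τ)| ≤ π/τ + π²/(2τ²). -/
open Real Finset

lemma sin_add_add_sin (a θ : ℝ) :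
    Real.sin (a + θ) + Real.sin (a - θ) = 2 * Real.sin a * Real.cos θ := by
  rw [Real.sin_add, Real.sin_sub]; ring

lemma sum_n_sin (K : ℕ) (θ : ℝ) :
    (4 * Real.sin (θ / 2) ^ 2) * ∑ n ∈ Finset.Icc 1 K, (n : ℝ) * Real.sin (n * θ)
      = ((K : ℝ) + 1) * Real.sin (K * θ) - (K : ℝ) * Real.sin (((K : ℝ) + 1) * θ) := by
  induction K with
  | zero => simp
  | succ K ih =>
    rw [Finset.sum_Icc_succ_top (by omega : 1 ≤ K + 1), mul_add, ih]
    have h4 : 4 * Real.sin (θ / 2) ^ 2 = 2 - 2 * Real.cos θ := by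
      have := Real.sin_sq_eq_half_sub (θ / 2)
      have h2 : 2 * (θ / 2) = θ := by ring
      rw [h2] at this
      linarith
    have hs : Real.sin (((K : ℝ) + 1) * θ + θ) + Real.sin (((K : ℝ) + 1) * θ - θ)
        = 2 * Real.sin (((K : ℝ) + 1) * θ) * Real.cos θ := sin_add_add_sin _ _
    have e1 : ((K : ℝ) + 1) * θ - θ = (K : ℝ) * θ := by ring
    have e2 : ((K : ℝ) + 1) * θ + θ = ((K : ℝ) + 1 + 1) * θ := by ring
    rw [e1, e2] at hs
    push_cast
    rw [h4]
    nlinarith [hs]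

theorem cK_deriv_bound (K : ℕ) (hK : 0 < K) (τ : ℝ) (hτ : 0 < τ) (hτK : τ ≤ K * Real.pi) :
    |(1 / (K : ℝ)) * ∑ n ∈ Finset.Icc 1 K, (n / K : ℝ) * Real.sin ((n / K : ℝ) * τ)|
      ≤ Real.pi / τ + Real.pi ^ 2 / (2 * τ ^ 2) := by
  have hKpos : (0 : ℝ) < K := by exact_mod_cast hK
  set θ : ℝ := τ / K with hθdef
  have hθpos : 0 < θ := div_pos hτ hKpos
  have hθle : θ ≤ Real.pi := by
    rw [hθdef, div_le_iff₀ hKpos]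
    linarith [hτK]
  set s : ℝ := Real.sin (θ / 2) with hsdef
  have hslow : θ / Real.pi ≤ s := by
    have := Real.mul_le_sin (x := θ / 2) (by linarith) (by linarith)
    calc θ / Real.pi = 2 / Real.pi * (θ / 2) := by
          field_simp
      _ ≤ s := this
  have hspos : 0 < s := lt_of_lt_of_le (div_pos hθpos Real.pi_pos) hslow
  -- rewrite the sum
  have hsum : ∑ n ∈ Finset.Icc 1 K, ((n : ℝ) / K) * Real.sin (((n : ℝ) / K) * τ)
      = (1 / K) * ∑ n ∈ Finset.Icc 1 K, (n : ℝ) * Real.sin (n * θ) := by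
    rw [Finset.mul_sum]
    refine Finset.sum_congr rfl fun n _ => ?_
    have : ((n : ℝ) / K) * τ = n * θ := by
      rw [hθdef]; field_simp
    rw [this]; ring
  set A : ℝ := ∑ n ∈ Finset.Icc 1 K, (n : ℝ) * Real.sin (n * θ) with hAdef
  have hid : (4 * s ^ 2) * A
      = ((K : ℝ) + 1) * Real.sin (K * θ) - (K : ℝ) * Real.sin (((K : ℝ) + 1) * θ) :=
    sum_n_sin K θ
  -- bound the numerator
  have hnum : |((K : ℝ) + 1) * Real.sin (K * θ) - (K : ℝ) * Real.sin (((K : ℝ) + 1) * θ)|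
      ≤ 2 * K * s + 1 := by
    have hdiff : Real.sin ((K : ℝ) * θ) - Real.sin (((K : ℝ) + 1) * θ)
        = 2 * Real.sin (-(θ / 2)) * Real.cos (((K : ℝ) * θ + ((K : ℝ) + 1) * θ) / 2) := by
      rw [Real.sin_sub_sin]
      congr 2
      ring
    have h1 : |Real.sin ((K : ℝ) * θ) - Real.sin (((K : ℝ) + 1) * θ)| ≤ 2 * s := by
      rw [hdiff, Real.sin_neg]
      rw [abs_mul, abs_mul]
      have hc : |Real.cos (((K : ℝ) * θ + ((K : ℝ) + 1) * θ) / 2)| ≤ 1 :=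
        Real.abs_cos_le_one _
      have habs : |(-s : ℝ)| = s := by rw [abs_neg, abs_of_pos hspos]
      calc |(2 : ℝ)| * |-s| * |Real.cos (((K : ℝ) * θ + ((K : ℝ) + 1) * θ) / 2)|
          ≤ |(2 : ℝ)| * |-s| * 1 := by
            apply mul_le_mul_of_nonneg_left hc (by positivity)
        _ = 2 * s := by rw [habs]; simp
    have hrw : ((K : ℝ) + 1) * Real.sin (K * θ) - (K : ℝ) * Real.sin (((K : ℝ) + 1) * θ)
        = (K : ℝ) * (Real.sin ((K : ℝ) * θ) - Real.sin (((K : ℝ) + 1) * θ))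
          + Real.sin ((K : ℝ) * θ) := by ring
    rw [hrw]
    calc |(K : ℝ) * (Real.sin ((K : ℝ) * θ) - Real.sin (((K : ℝ) + 1) * θ))
          + Real.sin ((K : ℝ) * θ)|
        ≤ |(K : ℝ) * (Real.sin ((K : ℝ) * θ) - Real.sin (((K : ℝ) + 1) * θ))|
          + |Real.sin ((K : ℝ) * θ)| := abs_add_le _ _
      _ ≤ (K : ℝ) * (2 * s) + 1 := by
          gcongr
          · rw [abs_mul, abs_of_pos hKpos]
            exact mul_le_mul_of_nonneg_left h1 hKpos.le
          · exact Real.abs_sin_le_one _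
      _ = 2 * K * s + 1 := by ring
  have hA : |A| ≤ (2 * K * s + 1) / (4 * s ^ 2) := by
    rw [le_div_iff₀ (by positivity)]
    calc |A| * (4 * s ^ 2) = |(4 * s ^ 2) * A| := by
          rw [abs_mul, abs_of_pos (by positivity : (0:ℝ) < 4 * s ^ 2)]; ring
      _ ≤ 2 * K * s + 1 := by rw [hid]; exact hnum
  -- final computation
  have hKs : τ / Real.pi ≤ K * s := by
    have heq : τ / Real.pi = K * (θ / Real.pi) := by
      rw [hθdef]; field_simp
    rw [heq]
    exact mul_le_mul_of_nonneg_left hslow hKpos.le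
  have hKspos : 0 < (K : ℝ) * s := by positivity
  rw [hsum, ← mul_assoc]
  have habsrw : |1 / (K : ℝ) * (1 / K) * A| = 1 / (K : ℝ) * (1 / K) * |A| := by
    rw [abs_mul, abs_mul, abs_of_pos (show (0:ℝ) < 1 / K by positivity)]
  rw [habsrw]
  have key : 1 / (K : ℝ) * (1 / K) * |A| ≤ (2 * K * s + 1) / (4 * s ^ 2 * K ^ 2) := by
    calc 1 / (K : ℝ) * (1 / K) * |A| ≤ 1 / (K : ℝ) * (1 / K) * ((2 * K * s + 1) / (4 * s ^ 2)) :=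
          mul_le_mul_of_nonneg_left hA (by positivity)
      _ = (2 * K * s + 1) / (4 * s ^ 2 * K ^ 2) := by
          field_simp
          try ring
          try tauto
  refine le_trans key ?_
  have hsplit : (2 * (K : ℝ) * s + 1) / (4 * s ^ 2 * K ^ 2)
      = 1 / (2 * (K * s)) + 1 / (4 * (K * s) ^ 2) := by
    field_simp
    try ring
    try tauto
  rw [hsplit]
  have hb1 : 1 / (2 * ((K : ℝ) * s)) ≤ Real.pi / (2 * τ) := by
    rw [div_le_div_iff₀ (by positivity) (by positivity)]
    calc (1 : ℝ) * (2 * τ) = 2 * Real.pi * (τ / Real.pi) := by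
          field_simp
      _ ≤ 2 * Real.pi * (K * s) := by
          gcongr
      _ = Real.pi * (2 * (K * s)) := by ring
  have hb2 : 1 / (4 * ((K : ℝ) * s) ^ 2) ≤ Real.pi ^ 2 / (4 * τ ^ 2) := by
    rw [div_le_div_iff₀ (by positivity) (by positivity)]
    have hsq : (τ / Real.pi) ^ 2 ≤ (K * s) ^ 2 := by
      apply pow_le_pow_left₀ (by positivity) hKs
    calc (1 : ℝ) * (4 * τ ^ 2) = 4 * Real.pi ^ 2 * (τ / Real.pi) ^ 2 := by
          field_simp
      _ ≤ 4 * Real.pi ^ 2 * (K * s) ^ 2 := by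
          gcongr
      _ = Real.pi ^ 2 * (4 * (K * s) ^ 2) := by ring
  have hfin1 : Real.pi / (2 * τ) ≤ Real.pi / τ := by
    apply div_le_div_of_nonneg_left Real.pi_pos.le hτ
    linarith
  have hfin2 : Real.pi ^ 2 / (4 * τ ^ 2) ≤ Real.pi ^ 2 / (2 * τ ^ 2) := by
    apply div_le_div_of_nonneg_left (by positivity) (by positivity)
    nlinarith [sq_nonneg τ]
  linarith
end
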